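/- Supplementary-factorization coefficient identity (rel-3a in the proof of Theorem 5.10/SuppFact): for every natural number n ≥ 2, every natural number N ≥ 1, every p ∈ ℂ and every i with 1 ≤ i ≤ N, one has γ_i^{(N)}(p − n + 2N + 1; n − p) = α_i^{(N)}(p − n + 2N + 1). -/

import Mathlib

open Finset Polynomial

noncomputable def aC (n N j : ℕ) (l : ℂ) : ℂ :=
  (-2 : ℂ) ^ (N - j) *
    ((N.factorial : ℂ) / ((j.factorial : ℂ) * ((2 * N - 2 * j).factorial : ℂ))) *
    ∏ k ∈ Finset.Ico j N, (2 * l - 4 * (N : ℂ) + 2 * (k : ℂ) + (n : ℂ) + 1)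

noncomputable def bC (n N j : ℕ) (l : ℂ) : ℂ :=
  (-2 : ℂ) ^ (N - j) *
    ((N.factorial : ℂ) / ((j.factorial : ℂ) * ((2 * N - 2 * j + 1).factorial : ℂ))) *
    ∏ k ∈ Finset.Ico j N, (2 * l - 4 * (N : ℂ) + 2 * (k : ℂ) + (n : ℂ) - 1)

noncomputable def bCZ (n M : ℕ) (j : ℤ) (l : ℂ) : ℂ :=
  if 0 ≤ j ∧ j ≤ (M : ℤ) then bC n M j.toNat l else 0

noncomputable def alphaC (n N i : ℕ) (l : ℂ) : ℂ :=
  (-1 : ℂ) ^ i * 2 ^ N * ((N.factorial : ℂ) / ((2 * N).factorial : ℂ)) * (N.choose i : ℂ) *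
    (∏ k ∈ Finset.Icc (i + 1) N, (2 * l + (n : ℂ) - 2 * (k : ℂ))) *
    ∏ k ∈ Finset.Icc 1 i, (2 * l + (n : ℂ) - 2 * (k : ℂ) - 2 * (N : ℂ) + 1)

noncomputable def betaC (n N i : ℕ) (l : ℂ) : ℂ :=
  (-1 : ℂ) ^ i * 2 ^ N * ((N.factorial : ℂ) / ((2 * N + 1).factorial : ℂ)) * (N.choose i : ℂ) *
    (∏ k ∈ Finset.Icc (i + 1) N, (2 * l + (n : ℂ) - 2 * (k : ℂ))) *
    ∏ k ∈ Finset.Icc 1 i, (2 * l + (n : ℂ) - 2 * (k : ℂ) - 2 * (N : ℂ) - 1)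

noncomputable def gammaC (n N i : ℕ) (l p : ℂ) : ℂ :=
  (-1 : ℂ) ^ i * 2 ^ N *
    ((N.factorial : ℂ) / (((N : ℂ) + 1) * ((2 * N + 1).factorial : ℂ))) *
    ((N + 1).choose i : ℂ) *
    ((l + p - 2 * (N : ℂ) - 1) * ((N : ℂ) + 1) * (2 * l + (n : ℂ) - 2 * (i : ℂ)) +
      (l + (n : ℂ) - p) * (2 * (N : ℂ) + 1) * ((N : ℂ) - (i : ℂ) + 1)) *
    (∏ k ∈ Finset.Icc (i + 1) N, (2 * l + (n : ℂ) - 2 * (k : ℂ))) *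
    ∏ k ∈ Finset.Icc 1 (i - 1), (2 * l + (n : ℂ) - 2 * (k : ℂ) - 2 * (N : ℂ) - 1)

noncomputable def poch (a : ℂ) (l : ℕ) : ℂ :=
  ∏ m ∈ Finset.range l, (a + (m : ℂ))

theorem supplementary_factorization_rel3a (n : ℕ) (hn : 2 ≤ n) (N : ℕ) (hN : 1 ≤ N)
    (p : ℂ) (i : ℕ) (hi1 : 1 ≤ i) (hiN : i ≤ N) :
    gammaC n N i (p - (n : ℂ) + 2 * (N : ℂ) + 1) ((n : ℂ) - p)
      = alphaC n N i (p - (n : ℂ) + 2 * (N : ℂ) + 1) := by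
  have h0 : (0:ℕ) < N.factorial := N.factorial_pos
  set l : ℂ := p - (n : ℂ) + 2 * (N : ℂ) + 1 with hl
  set x : ℂ := 2*p - (n:ℂ) + 2*(N:ℂ) + 1 with hx
  have hA : (∏ k ∈ Finset.Icc 1 i, (2 * l + (n : ℂ) - 2 * (k : ℂ) - 2 * (N : ℂ) + 1))
      = x * ∏ j ∈ Finset.range (i-1), (x - 2 - 2*(j:ℂ)) := by
    rw [← Finset.Ico_add_one_right_eq_Icc, Finset.prod_Ico_eq_prod_range]
    have : i + 1 - 1 = (i-1) + 1 := by omega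
    rw [this, Finset.prod_range_succ']
    push_cast
    rw [mul_comm]
    congr 1
    · rw [hl, hx]; ring
    · apply Finset.prod_congr rfl; intro j _; rw [hl, hx]; push_cast; ring
  have hG : (∏ k ∈ Finset.Icc 1 (i-1), (2 * l + (n : ℂ) - 2 * (k : ℂ) - 2 * (N : ℂ) - 1))
      = ∏ j ∈ Finset.range (i-1), (x - 2 - 2*(j:ℂ)) := by
    rw [← Finset.Ico_add_one_right_eq_Icc, Finset.prod_Ico_eq_prod_range]
    have : i - 1 + 1 - 1 = i - 1 := by omega
    rw [this]
    apply Finset.prod_congr rfl; intro j _; push_cast; ring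
  simp only [gammaC, alphaC, hA, hG]
  set P : ℂ := ∏ k ∈ Finset.Icc (i + 1) N, (2 * l + (n : ℂ) - 2 * (k : ℂ))
  set Q : ℂ := ∏ j ∈ Finset.range (i-1), (x - 2 - 2*(j:ℂ))
  have hbr : (l + ((n:ℂ) - p) - 2 * (N : ℂ) - 1) * ((N : ℂ) + 1) * (2 * l + (n : ℂ) - 2 * (i : ℂ)) +
      (l + (n : ℂ) - ((n:ℂ)-p)) * (2 * (N : ℂ) + 1) * ((N : ℂ) - (i : ℂ) + 1)
      = x * (2 * (N:ℂ) + 1) * ((N:ℂ) - (i:ℂ) + 1) := by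
    rw [hl, hx]; ring
  rw [hbr]
  have hcast : ((N:ℂ) - (i:ℂ) + 1) = ((N + 1 - i : ℕ) : ℂ) := by
    have : (N + 1 - i : ℕ) = N + 1 - i := rfl
    push_cast [Nat.cast_sub (by omega : i ≤ N + 1)]
    ring
  rw [hcast]
  have hkey : ((N+1).choose i : ℂ) * ((N + 1 - i : ℕ) : ℂ) = ((N:ℂ)+1) * (N.choose i : ℂ) := by
    have h2 : (N+1).choose i * (N + 1 - i) = (N+1) * N.choose i := by
      rw [Nat.mul_comm (N+1)]; exact (Nat.choose_mul_succ_eq N i).symm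
    exact_mod_cast h2
  have hfac : (((2*N+1).factorial : ℕ) : ℂ) = (2*(N:ℂ)+1) * (((2*N).factorial : ℕ) : ℂ) := by
    have : (2*N+1).factorial = (2*N+1) * (2*N).factorial := Nat.factorial_succ _
    rw [this]; push_cast; ring
  have hf1 : (((2*N).factorial : ℕ) : ℂ) ≠ 0 := Nat.cast_ne_zero.2 (2*N).factorial_pos.ne'
  have hf2 : ((N:ℂ)+1) ≠ 0 := by
    have : ((N:ℂ)+1) = ((N+1 : ℕ):ℂ) := by push_cast; ring
    rw [this]; exact Nat.cast_ne_zero.2 (by omega)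
  have hf3 : (2*(N:ℂ)+1) ≠ 0 := by
    have : (2*(N:ℂ)+1) = ((2*N+1 : ℕ):ℂ) := by push_cast; ring
    rw [this]; exact Nat.cast_ne_zero.2 (by omega)
  rw [hfac]
  field_simp
  rw [div_eq_iff (by contrapose! hf3; linear_combination hf3)]
  linear_combination (N.factorial : ℂ) * (2*(N:ℂ)+1) * x * P * Q * hkey
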